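/- Let A = C*C and B = D*D with C, D invertible, and suppose U is a unitary matrix such that C* U D is Hermitian positive definite. Then C* U D = A # B and U is the unitary polar factor of C D^{-1}. -/

import Mathlib

open Matrix ComplexOrder

namespace Matrix.PosSemidef

/-- The positive semidefinite square root of a positive semidefinite matrix
(the definition of the older Mathlib, since removed). -/
noncomputable def sqrt {𝕜 : Type*} [RCLike 𝕜] {n : Type*} [Fintype n] [DecidableEq n]
    {A : Matrix n n 𝕜} (hA : A.PosSemidef) : Matrix n n 𝕜 :=
  hA.1.eigenvectorUnitary.1 * diagonal ((↑) ∘ (√·) ∘ hA.1.eigenvalues) *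
  (star hA.1.eigenvectorUnitary : Matrix n n 𝕜)

lemma posSemidef_sqrt {𝕜 : Type*} [RCLike 𝕜] {n : Type*} [Fintype n] [DecidableEq n]
    {A : Matrix n n 𝕜} (hA : A.PosSemidef) : PosSemidef hA.sqrt := by
  unfold sqrt
  have h := (posSemidef_diagonal_iff.mpr (fun i => by
    simp only [Function.comp_apply, RCLike.ofReal_nonneg]; exact Real.sqrt_nonneg _) :
      PosSemidef (diagonal ((↑) ∘ (√·) ∘ hA.1.eigenvalues) : Matrix n n 𝕜)).mul_mul_conjTranspose_same
    (hA.1.eigenvectorUnitary : Matrix n n 𝕜)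
  simpa [Matrix.star_eq_conjTranspose] using h

section sqrtPort

open scoped MatrixOrder

lemma sqrt_eq_cfc_sqrt {𝕜 : Type*} [RCLike 𝕜] {n : Type*} [Fintype n] [DecidableEq n]
    {A : Matrix n n 𝕜} (hA : A.PosSemidef) : hA.sqrt = CFC.sqrt A := by
  rw [CFC.sqrt_eq_cfc, cfc_nnreal_eq_real _ A, hA.1.cfc_eq]
  simp only [IsHermitian.cfc, sqrt, Unitary.conjStarAlgAut_apply]
  congr 3
  funext i
  simp [Real.coe_sqrt, Real.coe_toNNReal', max_eq_left (hA.eigenvalues_nonneg i)]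

lemma sqrt_mul_self {𝕜 : Type*} [RCLike 𝕜] {n : Type*} [Fintype n] [DecidableEq n]
    {A : Matrix n n 𝕜} (hA : A.PosSemidef) : hA.sqrt * hA.sqrt = A := by
  rw [sqrt_eq_cfc_sqrt]
  exact CFC.sqrt_mul_sqrt_self A hA.nonneg

lemma eq_sqrt_of_sq_eq {𝕜 : Type*} [RCLike 𝕜] {n : Type*} [Fintype n] [DecidableEq n]
    {A B : Matrix n n 𝕜} (hA : A.PosSemidef) (hB : B.PosSemidef) (h : A ^ 2 = B) :
    A = hB.sqrt := by
  rw [sqrt_eq_cfc_sqrt, ← h, CFC.sqrt_sq A hA.nonneg]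

end sqrtPort

end Matrix.PosSemidef

lemma geomMean_aux {n : ℕ} {A B : Matrix (Fin n) (Fin n) ℂ} (hA : A.PosDef) (hB : B.PosDef) :
    ((hA.posSemidef.sqrt)⁻¹ * B * (hA.posSemidef.sqrt)⁻¹).PosSemidef := by
  have h := hB.posSemidef.conjTranspose_mul_mul_same (hA.posSemidef.sqrt)⁻¹
  rwa [(hA.posSemidef.posSemidef_sqrt.isHermitian.inv).eq] at h

/-- The geometric mean `A # B = A^{1/2} (A^{-1/2} B A^{-1/2})^{1/2} A^{1/2}` of two
Hermitian positive definite matrices. -/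
noncomputable def geomMean {n : ℕ} {A B : Matrix (Fin n) (Fin n) ℂ}
    (hA : A.PosDef) (hB : B.PosDef) : Matrix (Fin n) (Fin n) ℂ :=
  hA.posSemidef.sqrt * (geomMean_aux hA hB).sqrt * hA.posSemidef.sqrt

/-- Congruence by an invertible matrix preserves positive definiteness. -/
lemma posDef_conj_aux {n : ℕ} {M E : Matrix (Fin n) (Fin n) ℂ} (hM : M.PosDef)
    (hE : IsUnit E.det) : (Eᴴ * M * E).PosDef := by
  refine PosDef.of_dotProduct_mulVec_pos (isHermitian_conjTranspose_mul_mul E hM.1) fun x hx => ?_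
  have hEx : E *ᵥ x ≠ 0 := by
    intro h
    have := Matrix.mulVec_injective_iff_isUnit.2 ((Matrix.isUnit_iff_isUnit_det E).2 hE)
    exact hx (this (by simp [h]))
  simpa only [star_mulVec, dotProduct_mulVec, vecMul_vecMul] using hM.dotProduct_mulVec_pos hEx

/-- If `A = Cᴴ C`, `B = Dᴴ D` with `C, D` invertible and `U` is unitary with `Cᴴ U D`
Hermitian positive definite, then `Cᴴ U D = A # B` and `U` is the unitary polar factor
`(C D⁻¹) * ((C D⁻¹)ᴴ (C D⁻¹))^{-1/2}` of `C D⁻¹`. -/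
theorem geomMean_of_unitary_posDef {n : ℕ} {A B C D U : Matrix (Fin n) (Fin n) ℂ}
    (hA : A.PosDef) (hB : B.PosDef)
    (hC : IsUnit C.det) (hD : IsUnit D.det)
    (hAC : A = Cᴴ * C) (hBD : B = Dᴴ * D)
    (hU : Uᴴ * U = 1) (hU' : U * Uᴴ = 1)
    (hpos : (Cᴴ * U * D).PosDef)
    (hM : ((C * D⁻¹)ᴴ * (C * D⁻¹)).PosDef) :
    Cᴴ * U * D = geomMean hA hB ∧ U = C * D⁻¹ * (hM.posSemidef.sqrt)⁻¹ := by
  classical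
  set sA := hA.posSemidef.sqrt with hsA_def
  set S := Cᴴ * U * D with hS_def
  have hCH : IsUnit Cᴴ.det := by rw [det_conjTranspose]; exact hC.star
  have hDH : IsUnit Dᴴ.det := by rw [det_conjTranspose]; exact hD.star
  have hsA2 : sA * sA = A := hA.posSemidef.sqrt_mul_self
  have hdetA : IsUnit A.det := hA.det_pos.ne'.isUnit
  have hdet_sA : IsUnit sA.det := by
    have h : sA.det * sA.det = A.det := by rw [← det_mul, hsA2]
    exact isUnit_of_mul_isUnit_left (h ▸ hdetA)
  have hsA_herm_inv : (sA⁻¹)ᴴ = sA⁻¹ := hA.posSemidef.posSemidef_sqrt.isHermitian.inv.eq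
  have hS_herm : Sᴴ = S := hpos.isHermitian.eq
  have hSh : Dᴴ * Uᴴ * C = S := by
    calc Dᴴ * Uᴴ * C = Sᴴ := by simp [hS_def, Matrix.mul_assoc]
    _ = S := hS_herm
  have hAinv : A⁻¹ = C⁻¹ * Cᴴ⁻¹ := by
    rw [hAC, Matrix.mul_inv_rev]
  have key1 : S * A⁻¹ * S = B := by
    nth_rewrite 1 [← hSh]
    rw [hAinv, hS_def]
    calc Dᴴ * Uᴴ * C * (C⁻¹ * Cᴴ⁻¹) * (Cᴴ * U * D)
        = Dᴴ * (Uᴴ * ((C * C⁻¹) * (Cᴴ⁻¹ * (Cᴴ * (U * D))))) := by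
          simp only [Matrix.mul_assoc]
      _ = Dᴴ * (Uᴴ * (Cᴴ⁻¹ * (Cᴴ * (U * D)))) := by
          rw [mul_nonsing_inv _ hC, Matrix.one_mul]
      _ = Dᴴ * (Uᴴ * ((Cᴴ⁻¹ * Cᴴ) * (U * D))) := by simp only [Matrix.mul_assoc]
      _ = Dᴴ * (Uᴴ * (U * D)) := by rw [nonsing_inv_mul _ hCH, Matrix.one_mul]
      _ = Dᴴ * ((Uᴴ * U) * D) := by simp only [Matrix.mul_assoc]
      _ = B := by rw [hU, Matrix.one_mul, hBD]
  have hsAinv2 : sA⁻¹ * sA⁻¹ = A⁻¹ := by rw [← Matrix.mul_inv_rev, hsA2]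
  have hW_pd : (sA⁻¹ * S * sA⁻¹).PosDef := by
    have h := posDef_conj_aux (E := sA⁻¹) hpos (isUnit_nonsing_inv_det _ hdet_sA)
    rwa [hsA_herm_inv] at h
  have hW2 : (sA⁻¹ * S * sA⁻¹) ^ 2 = sA⁻¹ * B * sA⁻¹ := by
    rw [pow_two]
    calc sA⁻¹ * S * sA⁻¹ * (sA⁻¹ * S * sA⁻¹)
        = sA⁻¹ * (S * (sA⁻¹ * sA⁻¹) * S) * sA⁻¹ := by simp only [Matrix.mul_assoc]
      _ = sA⁻¹ * B * sA⁻¹ := by rw [hsAinv2, key1]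
  have hW_eq : sA⁻¹ * S * sA⁻¹ = (geomMean_aux hA hB).sqrt :=
    hW_pd.posSemidef.eq_sqrt_of_sq_eq _ hW2
  have part1 : S = geomMean hA hB := by
    rw [geomMean, ← hW_eq, ← hsA_def]
    refine Eq.symm ?_
    calc sA * (sA⁻¹ * S * sA⁻¹) * sA
        = (sA * sA⁻¹) * S * (sA⁻¹ * sA) := by simp only [Matrix.mul_assoc]
      _ = S := by rw [mul_nonsing_inv _ hdet_sA, nonsing_inv_mul _ hdet_sA,
            Matrix.one_mul, Matrix.mul_one]
  -- Part 2
  set T := Uᴴ * C * D⁻¹ with hT_def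
  have hTh_eq : Tᴴ = Dᴴ⁻¹ * S * D⁻¹ := by
    rw [hT_def, hS_def]
    simp only [conjTranspose_mul, conjTranspose_nonsing_inv, conjTranspose_conjTranspose]
    calc Dᴴ⁻¹ * (Cᴴ * U) = Dᴴ⁻¹ * (Cᴴ * U) * (D * D⁻¹) := by
          rw [mul_nonsing_inv _ hD, Matrix.mul_one]
      _ = Dᴴ⁻¹ * (Cᴴ * U * D) * D⁻¹ := by simp only [Matrix.mul_assoc]
  have hTh_pd : (Tᴴ).PosDef := by
    rw [hTh_eq]
    have h := posDef_conj_aux (E := D⁻¹) hpos (isUnit_nonsing_inv_det _ hD)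
    rwa [conjTranspose_nonsing_inv] at h
  have hermT : T = Tᴴ := by
    conv_lhs => rw [← conjTranspose_conjTranspose T]
    rw [hTh_pd.isHermitian.eq]
  have hT_pd : T.PosDef := by rw [hermT]; exact hTh_pd
  have hT2 : T ^ 2 = (C * D⁻¹)ᴴ * (C * D⁻¹) := by
    rw [pow_two]
    nth_rewrite 1 [hermT]
    rw [hT_def]
    simp only [conjTranspose_mul, conjTranspose_nonsing_inv, conjTranspose_conjTranspose]
    calc Dᴴ⁻¹ * (Cᴴ * U) * (Uᴴ * C * D⁻¹)
        = Dᴴ⁻¹ * Cᴴ * ((U * Uᴴ) * (C * D⁻¹)) := by simp only [Matrix.mul_assoc]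
      _ = Dᴴ⁻¹ * Cᴴ * (C * D⁻¹) := by rw [hU', Matrix.one_mul]
  have hT_sqrt : T = hM.posSemidef.sqrt := hT_pd.posSemidef.eq_sqrt_of_sq_eq _ hT2
  have hdetT : IsUnit T.det := hT_pd.det_pos.ne'.isUnit
  have hUT : U * T = C * D⁻¹ := by
    rw [hT_def]
    calc U * (Uᴴ * C * D⁻¹) = (U * Uᴴ) * (C * D⁻¹) := by simp only [Matrix.mul_assoc]
      _ = C * D⁻¹ := by rw [hU', Matrix.one_mul]
  refine ⟨part1, ?_⟩
  rw [← hT_sqrt, ← hUT, Matrix.mul_assoc, mul_nonsing_inv _ hdetT, Matrix.mul_one]
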